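/- Let ℓ: ℝᵖ → ℝ be μ-strongly convex and differentiable for each data point, and define L(θ) = (1/n)∑ᵢ₌₁ⁿ ℓᵢ(θ). For any z with associated μ-strongly convex differentiable loss ℓ_z and any α ≥ 0, both L and L + αℓ_z have unique minimizers θ* and θ*_α, and ‖θ*_α − θ*‖ ≤ α‖∇ℓ_z(θ*)‖/((1+α)μ). -/

import Mathlib

open Set Filter Topology

section aux
variable {E : Type*} [NormedAddCommGroup E] [InnerProductSpace ℝ E]

lemma convex_fderiv_le (f : E → ℝ) (hf : ConvexOn ℝ Set.univ f)
    (hd : Differentiable ℝ f) (x y : E) :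
    f x + fderiv ℝ f x (y - x) ≤ f y := by
  set g : ℝ → ℝ := fun t => f (t • (y - x) + x) with hgdef
  have hgc : ConvexOn ℝ Set.univ g := by
    have h := hf.comp_affineMap (AffineMap.lineMap x y : ℝ →ᵃ[ℝ] E)
    have he : g = f ∘ (AffineMap.lineMap x y : ℝ →ᵃ[ℝ] E) := by
      funext t; simp [g, AffineMap.lineMap_apply_module']
    rw [he]; simpa using h
  have h1 : HasDerivAt (fun t : ℝ => t • (y - x) + x) (y - x) 0 := by
    simpa using ((hasDerivAt_id (0 : ℝ)).smul_const (y - x)).add_const x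
  have e0 : x = (0 : ℝ) • (y - x) + x := by simp
  have h2 : HasDerivAt g (fderiv ℝ f x (y - x)) 0 := by
    have hF : HasFDerivAt f (fderiv ℝ f x) ((0 : ℝ) • (y - x) + x) := e0 ▸ (hd x).hasFDerivAt
    exact hF.comp_hasDerivAt 0 h1
  have h3 := hgc.le_slope_of_hasDerivAt (mem_univ (0 : ℝ)) (mem_univ (1 : ℝ)) zero_lt_one h2
  have hg0 : g 0 = f x := by simp [g]
  have hg1 : g 1 = f y := by simp [g]
  rw [slope_def_field, hg0, hg1] at h3
  simp only [sub_zero, div_one] at h3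
  linarith

lemma strong_fderiv_le (m : ℝ) (f : E → ℝ) (hf : StrongConvexOn Set.univ m f)
    (hd : Differentiable ℝ f) (x y : E) :
    f x + fderiv ℝ f x (y - x) + m / 2 * ‖y - x‖ ^ 2 ≤ f y := by
  set g : E → ℝ := fun z => f z - m / 2 * ‖z‖ ^ 2 with hgdef
  have hgc : ConvexOn ℝ Set.univ g := strongConvexOn_iff_convex.mp hf
  have hgd : ∀ z : E, HasFDerivAt g (fderiv ℝ f z - (m / 2) • (2 • (innerSL ℝ z))) z :=
    fun z => (hd z).hasFDerivAt.sub ((hasStrictFDerivAt_norm_sq z).hasFDerivAt.const_mul (m / 2))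
  have hdiff : Differentiable ℝ g := fun z => (hgd z).differentiableAt
  have key := convex_fderiv_le g hgc hdiff x y
  rw [(hgd x).fderiv] at key
  simp only [g, ContinuousLinearMap.sub_apply, ContinuousLinearMap.smul_apply,
    innerSL_apply_apply, smul_eq_mul, nsmul_eq_mul, Nat.cast_ofNat] at key
  have hn1 : ‖y - x‖ ^ 2 = ‖y‖ ^ 2 - 2 * inner ℝ y x + ‖x‖ ^ 2 := by
    rw [@norm_sub_sq_real]
  have hn2 : (inner ℝ x (y - x) : ℝ) = inner ℝ x y - ‖x‖ ^ 2 := by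
    rw [inner_sub_right, real_inner_self_eq_norm_sq]
  have hn3 : (inner ℝ y x : ℝ) = inner ℝ x y := real_inner_comm x y
  rw [hn2] at key
  have hEq : m / 2 * ‖y - x‖ ^ 2
      = m / 2 * ‖y‖ ^ 2 - m * (inner ℝ x y : ℝ) + m / 2 * ‖x‖ ^ 2 := by
    rw [hn1, hn3]; ring
  linarith [key, hEq]

lemma strong_exists_min [ProperSpace E] (m : ℝ) (hm : 0 < m) (f : E → ℝ)
    (hf : StrongConvexOn Set.univ m f) (hd : Differentiable ℝ f) :
    ∃ z, IsMinOn f Set.univ z := by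
  set v := fderiv ℝ f 0 with hv
  have key : ∀ y : E, 2 * ‖v‖ / m ≤ ‖y‖ → f 0 ≤ f y := by
    intro y hy
    have h1 := strong_fderiv_le m f hf hd 0 y
    simp only [sub_zero] at h1
    have h2 : ‖v y‖ ≤ ‖v‖ * ‖y‖ := v.le_opNorm y
    rw [Real.norm_eq_abs] at h2
    have h3 : 2 * ‖v‖ ≤ m * ‖y‖ := by
      rw [div_le_iff₀ hm] at hy; linarith [hy]
    have h4 : ‖v‖ * ‖y‖ ≤ m / 2 * ‖y‖ ^ 2 := by nlinarith [norm_nonneg y]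
    have h5 := neg_abs_le (v y)
    linarith
  have hev : ∀ᶠ y in cocompact E, f 0 ≤ f y :=
    (tendsto_norm_cocompact_atTop.eventually (eventually_ge_atTop (2 * ‖v‖ / m))).mono key
  obtain ⟨z, hz⟩ := hd.continuous.exists_forall_le' 0 hev
  exact ⟨z, isMinOn_univ_iff.mpr hz⟩


lemma convexOn_finsum {ι : Type*} (t : Finset ι) (f : ι → E → ℝ)
    (h : ∀ i ∈ t, ConvexOn ℝ Set.univ (f i)) :
    ConvexOn ℝ Set.univ (fun x => ∑ i ∈ t, f i x) := by
  classical
  induction t using Finset.induction_on with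
  | empty => simpa using convexOn_const (0 : ℝ) convex_univ
  | @insert a s hni ih =>
    simp only [Finset.sum_insert hni]
    exact (h a (Finset.mem_insert_self a s)).add
      (ih fun i hi => h i (Finset.mem_insert_of_mem hi))

end aux

set_option maxHeartbeats 1000000 in
theorem parameter_shift_bound {p n : ℕ} (μ : ℝ) (hμ : 0 < μ)
    (ℓ : Fin n → EuclideanSpace ℝ (Fin p) → ℝ)
    (hℓconv : ∀ i, StrongConvexOn Set.univ μ (ℓ i))
    (hℓdiff : ∀ i, Differentiable ℝ (ℓ i))
    (L : EuclideanSpace ℝ (Fin p) → ℝ)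
    (hL : L = fun θ => (1 / n : ℝ) * ∑ i, ℓ i θ)
    (ℓz : EuclideanSpace ℝ (Fin p) → ℝ)
    (hℓzconv : StrongConvexOn Set.univ μ ℓz)
    (hℓzdiff : Differentiable ℝ ℓz)
    (α : ℝ) (hα : 0 ≤ α) (hn : 0 < n) :
    (∃! θs, IsMinOn L Set.univ θs) ∧
      (∃! θa, IsMinOn (fun θ => L θ + α * ℓz θ) Set.univ θa) ∧
      ∀ θs θa, IsMinOn L Set.univ θs →
        IsMinOn (fun θ => L θ + α * ℓz θ) Set.univ θa →
        ‖θa - θs‖ ≤ α * ‖gradient ℓz θs‖ / ((1 + α) * μ) := by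
  have hn' : (n : ℝ) ≠ 0 := Nat.cast_ne_zero.mpr hn.ne'
  set G : EuclideanSpace ℝ (Fin p) → ℝ := fun θ => L θ + α * ℓz θ with hG
  -- L is μ-strongly convex
  have hLconv : StrongConvexOn Set.univ μ L := by
    rw [strongConvexOn_iff_convex]
    have hsum := convexOn_finsum Finset.univ (fun i x => ℓ i x - μ / 2 * ‖x‖ ^ 2)
      (fun i _ => strongConvexOn_iff_convex.mp (hℓconv i))
    have hsc := hsum.smul (c := (1 / n : ℝ)) (by positivity)
    have he : (fun x : EuclideanSpace ℝ (Fin p) => L x - μ / 2 * ‖x‖ ^ 2)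
        = fun x => (1 / n : ℝ) • ∑ i, (ℓ i x - μ / 2 * ‖x‖ ^ 2) := by
      funext x
      rw [hL]
      simp only [smul_eq_mul, Finset.sum_sub_distrib, Finset.sum_const, Finset.card_univ,
        Fintype.card_fin, nsmul_eq_mul]
      field_simp
    rw [he]
    exact hsc
  have hMpos : 0 < (1 + α) * μ := by positivity
  -- G is (1+α)μ-strongly convex
  have hGconv : StrongConvexOn Set.univ ((1 + α) * μ) G := by
    rw [strongConvexOn_iff_convex]
    have h1 := strongConvexOn_iff_convex.mp hLconv
    have h2 := (strongConvexOn_iff_convex.mp hℓzconv).smul hα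
    have h3 := h1.add h2
    have he : (fun x : EuclideanSpace ℝ (Fin p) => G x - (1 + α) * μ / 2 * ‖x‖ ^ 2)
        = ((fun x => L x - μ / 2 * ‖x‖ ^ 2) + fun x => α • (ℓz x - μ / 2 * ‖x‖ ^ 2)) := by
      funext x
      simp only [Pi.add_apply, smul_eq_mul, G]
      ring
    rw [he]
    exact h3
  have hLdiff : Differentiable ℝ L := by
    rw [hL]
    exact (Differentiable.fun_sum fun i _ => hℓdiff i).const_mul _
  have hGdiff : Differentiable ℝ G := hLdiff.add (hℓzdiff.const_mul α)
  obtain ⟨θs₀, hθs₀⟩ := strong_exists_min μ hμ L hLconv hLdiff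
  obtain ⟨θa₀, hθa₀⟩ := strong_exists_min _ hMpos G hGconv hGdiff
  refine ⟨⟨θs₀, hθs₀, fun y hy => (hLconv.strictConvexOn hμ).eq_of_isMinOn hy hθs₀
      (Set.mem_univ _) (Set.mem_univ _)⟩,
    ⟨θa₀, hθa₀, fun y hy => (hGconv.strictConvexOn hMpos).eq_of_isMinOn hy hθa₀
      (Set.mem_univ _) (Set.mem_univ _)⟩, ?_⟩
  intro θs θa hs ha
  set g := gradient ℓz θs with hg
  -- fderiv L θs = 0
  have hDL : fderiv ℝ L θs = 0 := (hs.isLocalMin univ_mem).fderiv_eq_zero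
  have hDG : fderiv ℝ G θa = 0 := (ha.isLocalMin univ_mem).fderiv_eq_zero
  -- fderiv G θs = α • (toDual g)
  have hgradz : HasFDerivAt ℓz (InnerProductSpace.toDual ℝ _ g) θs :=
    hasGradientAt_iff_hasFDerivAt.mp (hℓzdiff θs).hasGradientAt
  have hDGs : fderiv ℝ G θs = fderiv ℝ L θs + α • (InnerProductSpace.toDual ℝ _ g) :=
    ((hLdiff θs).hasFDerivAt.add (hgradz.const_mul α)).fderiv
  have ineq1 := strong_fderiv_le _ G hGconv hGdiff θa θs
  have ineq2 := strong_fderiv_le _ G hGconv hGdiff θs θa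
  rw [hDG] at ineq1
  rw [hDGs, hDL] at ineq2
  simp only [ContinuousLinearMap.zero_apply, zero_add, ContinuousLinearMap.add_apply,
    ContinuousLinearMap.smul_apply, smul_eq_mul, InnerProductSpace.toDual_apply_apply] at ineq1 ineq2
  have hns : ‖θs - θa‖ = ‖θa - θs‖ := norm_sub_rev _ _
  rw [hns] at ineq1
  have hcs : |(inner ℝ g (θa - θs) : ℝ)| ≤ ‖g‖ * ‖θa - θs‖ := abs_real_inner_le_norm _ _
  have hkey : (1 + α) * μ * ‖θa - θs‖ ^ 2 ≤ α * ‖g‖ * ‖θa - θs‖ := by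
    have h5 := neg_abs_le (inner ℝ g (θa - θs) : ℝ)
    nlinarith [ineq1, ineq2, hcs, h5, mul_le_mul_of_nonneg_left hcs hα]
  rcases eq_or_lt_of_le (norm_nonneg (θa - θs)) with hd0 | hd0
  · rw [← hd0]
    positivity
  · rw [le_div_iff₀ hMpos]
    nlinarith [hkey, hd0]
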